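/- arXiv:1808.01441 — 4 statements merged into one kernel-verified Lean document; each statement's English description precedes it below -/
import Mathlib

section
/- Let f ∈ ℤ[X] be a monic irreducible polynomial of degree d ≥ 2 with d distinct real roots α_1 < ⋯ < α_d, and let g ∈ ℤ[X] be a monic polynomial that interlaces f. For i = 1, …, d set λ_i = g(α_i)/f′(α_i). Then λ_i > 0 for every i, ∑_{i=1}^d λ_i = 1, and ∏_{i=1}^d λ_i = |Res(f, g)| / |Disc(f)|, where Res(f,g) denotes the resultant of f and g and Disc(f) the discriminant of f. -/
open Polynomial

/-- Let `f ∈ ℤ[X]` be monic irreducible of degree `n + 1 ≥ 2` with real roots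
`α 0 < ⋯ < α n`, interlaced by the monic `g ∈ ℤ[X]` with roots `β 0, …, β (n-1)`.
Setting `λ i = g(α i) / f′(α i)`, each `λ i` is positive, `∑ λ i = 1`, and
`∏ λ i = |Res(f, g)| / |Disc(f)|`.  Here, `f` being monic with the real roots `α i`,
`|Res(f, g)| = ∏ i, |g(α i)|` and `|Disc(f)| = ∏_{i < j} (α i − α j)²`. -/
theorem statement6 (n : ℕ) (hn : 1 ≤ n) (f g : Polynomial ℤ)
    (hm : f.Monic) (hirr : Irreducible f)
    (α : Fin (n + 1) → ℝ) (β : Fin n → ℝ) (hsm : StrictMono α)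
    (hf : f.map (Int.castRingHom ℝ) = ∏ i, (X - C (α i)))
    (hg : g.map (Int.castRingHom ℝ) = ∏ i, (X - C (β i)))
    (hint : ∀ i : Fin n, α i.castSucc < β i ∧ β i < α i.succ)
    (lam : Fin (n + 1) → ℝ)
    (hlam : ∀ i, lam i = (Polynomial.aeval (α i) g) /
      ((Polynomial.derivative (f.map (Int.castRingHom ℝ))).eval (α i))) :
    (∀ i, 0 < lam i) ∧ (∑ i, lam i = 1) ∧
      ∏ i, lam i =
        (∏ i, |Polynomial.aeval (α i) g|) /
          (∏ i, ∏ j ∈ Finset.univ.filter (fun j => i < j), (α i - α j) ^ 2) := by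
  classical
  have hαinj : Set.InjOn α (Finset.univ : Finset (Fin (n + 1))) :=
    fun x _ y _ h => hsm.injective h
  have hFnodal : f.map (Int.castRingHom ℝ) = Lagrange.nodal Finset.univ α := by
    rw [hf, Lagrange.nodal_eq]
  have hGnodal : g.map (Int.castRingHom ℝ) = Lagrange.nodal Finset.univ β := by
    rw [hg, Lagrange.nodal_eq]
  -- evaluation of g
  have hGeval : ∀ x : ℝ, (Polynomial.aeval x g : ℝ) = ∏ k, (x - β k) := by
    intro x
    rw [aeval_def, ← eval_map]
    rw [show (algebraMap ℤ ℝ) = Int.castRingHom ℝ from rfl, hg]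
    simp [eval_prod]
  -- evaluation of f'
  have hD : ∀ i, (Polynomial.derivative (f.map (Int.castRingHom ℝ))).eval (α i)
      = ∏ j ∈ Finset.univ.erase i, (α i - α j) := by
    intro i
    rw [hFnodal, Lagrange.eval_nodal_derivative_eval_node_eq (Finset.mem_univ i),
      Lagrange.eval_nodal]
  have hDprod : ∀ i, (Polynomial.derivative (f.map (Int.castRingHom ℝ))).eval (α i)
      = ∏ k : Fin n, (α i - α (i.succAbove k)) := by
    intro i
    rw [hD i, ← Finset.compl_singleton, ← Fin.image_succAbove_univ i,
      Finset.prod_image (fun a _ b _ h => (Fin.succAbove_right_injective (p := i)) h)]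
  have hlam' : ∀ i, lam i = ∏ k : Fin n, (α i - β k) / (α i - α (i.succAbove k)) := by
    intro i
    rw [hlam i, hGeval, hDprod, Finset.prod_div_distrib]
  -- positivity
  have hpos : ∀ i, 0 < lam i := by
    intro i
    rw [hlam' i]
    apply Finset.prod_pos
    intro k _
    rcases lt_or_ge k.castSucc i with h | h
    · have h1 : β k < α i := lt_of_lt_of_le (hint k).2
        (hsm.monotone (Fin.castSucc_lt_iff_succ_le.mp h))
      have h2 : α k.castSucc < α i := hsm h
      exact div_pos (by linarith) (by
        rw [Fin.succAbove_of_castSucc_lt _ _ h]; linarith)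
    · have h1 : α i < β k := lt_of_le_of_lt (hsm.monotone h) (hint k).1
      have h2 : α i < α k.succ :=
        hsm (lt_of_le_of_lt h (Fin.castSucc_lt_succ (i := k)))
      rw [Fin.succAbove_of_le_castSucc _ _ h]
      apply div_pos_of_neg_of_neg <;> linarith
  refine ⟨hpos, ?_, ?_⟩
  · -- sum equals 1 via Lagrange interpolation
    set G := g.map (Int.castRingHom ℝ) with hGdef
    have hGmonic : G.Monic := by rw [hGnodal]; exact Lagrange.nodal_monic
    have hGnat : G.natDegree = n := by
      rw [hGnodal, Lagrange.natDegree_nodal, Finset.card_univ, Fintype.card_fin]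
    have hGdeg : G.degree < (Finset.univ : Finset (Fin (n + 1))).card := by
      rw [hGnodal, Lagrange.degree_nodal, Finset.card_univ, Finset.card_univ,
        Fintype.card_fin, Fintype.card_fin]
      exact_mod_cast Nat.lt_succ_self n
    have hinterp := Lagrange.eq_interpolate hαinj hGdeg
    have hcoeff := congrArg (fun p => Polynomial.coeff p n) hinterp
    have hlhs : G.coeff n = 1 := by
      rw [← hGnat]; exact hGmonic.coeff_natDegree
    rw [hlhs, Lagrange.interpolate_apply, Polynomial.finset_sum_coeff] at hcoeff
    have hbasis : ∀ i : Fin (n + 1),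
        (C (G.eval (α i)) * Lagrange.basis Finset.univ α i).coeff n
          = G.eval (α i) * Lagrange.nodalWeight Finset.univ α i := by
      intro i
      rw [Polynomial.coeff_C_mul,
        Lagrange.basis_eq_prod_sub_inv_mul_nodal_div (Finset.mem_univ i),
        ← Lagrange.nodal_erase_eq_nodal_div (Finset.mem_univ i), Polynomial.coeff_C_mul]
      have hmono : (Lagrange.nodal ((Finset.univ : Finset (Fin (n+1))).erase i) α).Monic :=
        Lagrange.nodal_monic
      have hnd : (Lagrange.nodal ((Finset.univ : Finset (Fin (n+1))).erase i) α).natDegree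
          = n := by
        rw [Lagrange.natDegree_nodal, Finset.card_erase_of_mem (Finset.mem_univ i),
          Finset.card_univ, Fintype.card_fin]
        omega
      have hc1 : (Lagrange.nodal ((Finset.univ : Finset (Fin (n+1))).erase i) α).coeff n = 1 := by
        simpa [hnd] using hmono.coeff_natDegree
      rw [hc1, mul_one, mul_comm]
    rw [Finset.sum_congr rfl (fun i _ => hbasis i)] at hcoeff
    have hlw : ∀ i, lam i = G.eval (α i) * Lagrange.nodalWeight Finset.univ α i := by
      intro i
      rw [hlam i, Lagrange.nodalWeight_eq_eval_derivative_nodal (Finset.mem_univ i),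
        ← hFnodal, div_eq_mul_inv]
      congr 1
      rw [aeval_def, ← eval_map]
      rfl
    rw [Finset.sum_congr rfl (fun i _ => hlw i)]
    exact hcoeff.symm
  · -- product formula
    have habs : ∀ i, lam i = |Polynomial.aeval (α i) g|
        / |(Polynomial.derivative (f.map (Int.castRingHom ℝ))).eval (α i)| := by
      intro i
      have := abs_of_pos (hpos i)
      rw [← this, hlam i, abs_div]
    rw [Finset.prod_congr rfl (fun i _ => habs i), Finset.prod_div_distrib]
    congr 1
    -- ∏ |f'(α i)| = ∏_{i<j} (α i - α j)^2
    have h1 : ∀ i, |(Polynomial.derivative (f.map (Int.castRingHom ℝ))).eval (α i)|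
        = (∏ j ∈ Finset.univ.filter (fun j => j < i), |α i - α j|)
          * ∏ j ∈ Finset.univ.filter (fun j => i < j), |α i - α j| := by
      intro i
      rw [hD i, Finset.abs_prod]
      have hsplit : (Finset.univ : Finset (Fin (n+1))).erase i
          = Finset.univ.filter (fun j => j < i) ∪ Finset.univ.filter (fun j => i < j) := by
        ext j
        simp only [Finset.mem_erase, Finset.mem_univ, and_true, Finset.mem_union,
          Finset.mem_filter, true_and]
        constructor
        · intro h; exact lt_or_gt_of_ne h
        · rintro (h | h) <;> [exact ne_of_lt h; exact ne_of_gt h]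
      rw [hsplit, Finset.prod_union (by
        rw [Finset.disjoint_left]
        intro j hj hj'
        simp only [Finset.mem_filter, Finset.mem_univ, true_and] at hj hj'
        exact absurd (hj.trans hj') (lt_irrefl j))]
    rw [Finset.prod_congr rfl (fun i _ => h1 i), Finset.prod_mul_distrib]
    have hswap : (∏ i : Fin (n+1), ∏ j ∈ Finset.univ.filter (fun j => j < i), |α i - α j|)
        = ∏ i : Fin (n+1), ∏ j ∈ Finset.univ.filter (fun j => i < j), |α i - α j| := by
      rw [Finset.prod_comm' (t' := (Finset.univ : Finset (Fin (n+1))))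
        (s' := fun j => Finset.univ.filter (fun i => j < i))
        (by intro x y; simp)]
      apply Finset.prod_congr rfl; intro i _
      apply Finset.prod_congr rfl; intro j _
      exact abs_sub_comm _ _
    rw [hswap, ← Finset.prod_mul_distrib]
    apply Finset.prod_congr rfl; intro i _
    rw [← Finset.prod_mul_distrib]
    apply Finset.prod_congr rfl; intro j _
    rw [← abs_mul, ← sq, abs_of_nonneg (sq_nonneg _)]
end

section
/- Let f ∈ ℤ[X] be a monic separable polynomial of degree d ≥ 2 whose roots α_1, …, α_d are all real. Let 𝒞(f) ⊆ ℝ^d be the convex hull of the d points (α_i^{d−1}, α_i^{d−2}, …, α_i, 1) for i = 1, …, d, and let 𝒦(f) ⊆ ℝ^d be the convex hull of the d points (1, b_1^{(i)}, …, b_{d−1}^{(i)}) for i = 1, …, d, where ∏_{j ≠ i}(X − α_j) = X^{d−1} + ∑_{j=1}^{d−1} b_j^{(i)} X^{d−1−j}. Then the sets 𝒞(f) ∩ ℤ^d and 𝒦(f) ∩ ℤ^d are finite and have the same cardinality. -/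
open Polynomial

namespace Statement8Aux

/-- Extend a vector on `Fin d` by zero to `ℕ`. -/
def zext (d : ℕ) (v : Fin d → ℝ) (j : ℕ) : ℝ := if h : j < d then v ⟨j, h⟩ else 0

/-- The unipotent integer linear map carrying power vectors to coefficient vectors. -/
def T (d : ℕ) (c : ℕ → ℝ) (v : Fin d → ℝ) (k : Fin d) : ℝ :=
  ∑ t ∈ Finset.range ((k : ℕ) + 1), c (d - t) * zext d v (d - 1 - (k : ℕ) + t)

lemma zext_add (d : ℕ) (u v : Fin d → ℝ) (j : ℕ) :
    zext d (u + v) j = zext d u j + zext d v j := by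
  unfold zext; split <;> simp

lemma zext_smul (d : ℕ) (a : ℝ) (v : Fin d → ℝ) (j : ℕ) :
    zext d (a • v) j = a * zext d v j := by
  unfold zext; split <;> simp

lemma T_linear (d : ℕ) (c : ℕ → ℝ) : IsLinearMap ℝ (T d c) := by
  constructor
  · intro u v; funext k
    simp only [T, zext_add, mul_add, Finset.sum_add_distrib, Pi.add_apply]
  · intro a v; funext k
    simp only [T, zext_smul, Pi.smul_apply, smul_eq_mul, Finset.mul_sum]
    exact Finset.sum_congr rfl fun t _ => by ring

/-- Decomposition of `T` separating the unit term `t = 0`. -/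
lemma T_decomp (d : ℕ) (c : ℕ → ℝ) (hc : c d = 1) (v : Fin d → ℝ) (k : Fin d) :
    T d c v k = zext d v (d - 1 - (k : ℕ)) +
      ∑ t ∈ Finset.range (k : ℕ), c (d - (t + 1)) * zext d v (d - 1 - (k : ℕ) + t + 1) := by
  rw [T, Finset.sum_range_succ']
  simp only [Nat.sub_zero, add_zero, hc, one_mul]
  rw [add_comm]
  congr 1

lemma index_eq (d k t : ℕ) (hk : k < d) (ht : t < k) :
    d - 1 - k + t + 1 = d - 1 - (k - (t + 1)) := by omega

/-- If `T v` is integral then so is `v`. -/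
lemma T_int_inv (d : ℕ) (c : ℕ → ℝ) (hc : c d = 1) (hci : ∀ s, ∃ n : ℤ, c s = n)
    (v : Fin d → ℝ) (hw : ∀ k, ∃ n : ℤ, T d c v k = n) : ∀ k, ∃ n : ℤ, v k = n := by
  set R := (Int.castRingHom ℝ).range with hR
  have hmem : ∀ x : ℝ, (∃ n : ℤ, x = n) ↔ x ∈ R := by
    intro x
    simp [hR, RingHom.mem_range, eq_comm]
  have key : ∀ m : ℕ, m < d → zext d v (d - 1 - m) ∈ R := by
    intro m
    induction m using Nat.strong_induction_on with
    | _ m ih =>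
      intro hm
      have hd := T_decomp d c hc v ⟨m, hm⟩
      simp only [Fin.val_mk] at hd
      have : zext d v (d - 1 - m) = T d c v ⟨m, hm⟩ -
          ∑ t ∈ Finset.range m, c (d - (t + 1)) * zext d v (d - 1 - m + t + 1) := by
        rw [hd]; ring
      rw [this]
      refine Subring.sub_mem _ ((hmem _).mp (hw _)) (Subring.sum_mem _ fun t ht => ?_)
      have htm := Finset.mem_range.mp ht
      have := index_eq d m t hm htm
      rw [this]
      exact Subring.mul_mem _ ((hmem _).mp (hci _)) (ih (m - (t + 1)) (by omega) (by omega))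
  intro k
  rw [hmem]
  have hk := k.isLt
  have h1 : d - 1 - (d - 1 - (k : ℕ)) = (k : ℕ) := by omega
  have h2 := key (d - 1 - (k : ℕ)) (by omega)
  rw [h1] at h2
  have h3 : zext d v (k : ℕ) = v k := by
    rw [zext, dif_pos k.isLt]
  rwa [h3] at h2

/-- `T` is injective. -/
lemma T_inj (d : ℕ) (c : ℕ → ℝ) (hc : c d = 1) : Function.Injective (T d c) := by
  have lin := T_linear d c
  have hker : ∀ v : Fin d → ℝ, T d c v = 0 → v = 0 := by
    intro v hv
    have key : ∀ m : ℕ, m < d → zext d v (d - 1 - m) = 0 := by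
      intro m
      induction m using Nat.strong_induction_on with
      | _ m ih =>
        intro hm
        have hd := T_decomp d c hc v ⟨m, hm⟩
        simp only [Fin.val_mk] at hd
        have h0 : T d c v ⟨m, hm⟩ = 0 := by rw [hv]; rfl
        rw [h0] at hd
        have hsum : ∑ t ∈ Finset.range m, c (d - (t + 1)) * zext d v (d - 1 - m + t + 1) = 0 := by
          refine Finset.sum_eq_zero fun t ht => ?_
          have htm := Finset.mem_range.mp ht
          rw [index_eq d m t hm htm, ih (m - (t + 1)) (by omega) (by omega)]
          ring
        rw [hsum] at hd
        linarith
    funext k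
    have hk := k.isLt
    have h1 : d - 1 - (d - 1 - (k : ℕ)) = (k : ℕ) := by omega
    have h2 := key (d - 1 - (k : ℕ)) (by omega)
    rw [h1] at h2
    rw [zext, dif_pos k.isLt] at h2
    exact h2
  intro u v huv
  have : T d c (u - v) = 0 := by
    rw [lin.map_sub, huv, sub_self]
  have := hker _ this
  exact sub_eq_zero.mp this

/-- `T` preserves integrality. -/
lemma T_int_fwd (d : ℕ) (c : ℕ → ℝ) (hci : ∀ s, ∃ n : ℤ, c s = n)
    (v : Fin d → ℝ) (hv : ∀ k, ∃ n : ℤ, v k = n) : ∀ k, ∃ n : ℤ, T d c v k = n := by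
  set R := (Int.castRingHom ℝ).range with hR
  have hmem : ∀ x : ℝ, (∃ n : ℤ, x = n) ↔ x ∈ R := by
    intro x; simp [hR, RingHom.mem_range, eq_comm]
  intro k
  rw [hmem]
  refine Subring.sum_mem _ fun t _ => Subring.mul_mem _ ((hmem _).mp (hci _)) ?_
  rw [zext]
  split
  · exact (hmem _).mp (hv _)
  · exact Subring.zero_mem _

end Statement8Aux

open Statement8Aux

/-- Let `f ∈ ℤ[X]` be monic separable of degree `d ≥ 2` with (distinct) real roots
`α 1, …, α d`.  Let `𝒞(f) ⊆ ℝ^d` be the convex hull of the points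
`(α_i^{d−1}, …, α_i, 1)` and `𝒦(f) ⊆ ℝ^d` the convex hull of the coefficient vectors
`(1, b_1^{(i)}, …, b_{d−1}^{(i)})` of the polynomials `∏_{j ≠ i} (X − α_j)`.  Then
`𝒞(f) ∩ ℤ^d` and `𝒦(f) ∩ ℤ^d` are finite of the same cardinality. -/
theorem statement8 (d : ℕ) (hd : 2 ≤ d) (f : Polynomial ℤ) (α : Fin d → ℝ)
    (hα : Function.Injective α)
    (hf : f.map (Int.castRingHom ℝ) = ∏ i, (X - C (α i))) :
    letI Cf : Set (Fin d → ℝ) :=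
      convexHull ℝ (Set.range fun i : Fin d => fun k : Fin d => α i ^ (d - 1 - (k : ℕ)))
    letI Kf : Set (Fin d → ℝ) :=
      convexHull ℝ (Set.range fun i : Fin d => fun k : Fin d =>
        (∏ j ∈ Finset.univ.erase i, (X - C (α j))).coeff (d - 1 - (k : ℕ)))
    letI Zd : Set (Fin d → ℝ) := {v | ∀ k, ∃ n : ℤ, v k = n}
    (Cf ∩ Zd).Finite ∧ (Kf ∩ Zd).Finite ∧ (Cf ∩ Zd).ncard = (Kf ∩ Zd).ncard := by
  set Cf : Set (Fin d → ℝ) :=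
    convexHull ℝ (Set.range fun i : Fin d => fun k : Fin d => α i ^ (d - 1 - (k : ℕ)))
    with hCfdef
  set Kf : Set (Fin d → ℝ) :=
    convexHull ℝ (Set.range fun i : Fin d => fun k : Fin d =>
      (∏ j ∈ Finset.univ.erase i, (X - C (α j))).coeff (d - 1 - (k : ℕ))) with hKfdef
  set Zd : Set (Fin d → ℝ) := {v | ∀ k, ∃ n : ℤ, v k = n} with hZddef
  -- notation
  set F : ℝ[X] := f.map (Int.castRingHom ℝ) with hF
  set c : ℕ → ℝ := fun s => ((f.coeff s : ℤ) : ℝ) with hcdef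
  have hcF : ∀ s, c s = F.coeff s := by
    intro s; rw [hF, coeff_map]; rfl
  have hci : ∀ s, ∃ n : ℤ, c s = n := fun s => ⟨f.coeff s, rfl⟩
  set g : Fin d → ℝ[X] := fun i => ∏ j ∈ Finset.univ.erase i, (X - C (α j)) with hg
  have hsplit : ∀ i, F = (X - C (α i)) * g i := by
    intro i
    rw [hf]
    simp only [hg]
    exact (Finset.mul_prod_erase _ _ (Finset.mem_univ i)).symm
  have hgmonic : ∀ i, (g i).Monic := fun i =>
    monic_prod_of_monic _ _ fun j _ => monic_X_sub_C _
  have hgdeg : ∀ i, (g i).natDegree = d - 1 := by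
    intro i
    simp only [hg]
    rw [natDegree_prod_of_monic _ _ fun j _ => monic_X_sub_C _]
    simp [natDegree_X_sub_C, Finset.card_erase_of_mem]
  have hFmonic : F.Monic := by
    rw [hf]; exact monic_prod_of_monic _ _ fun j _ => monic_X_sub_C _
  have hFdeg : F.natDegree = d := by
    rw [hf, natDegree_prod_of_monic _ _ fun j _ => monic_X_sub_C _]
    simp [natDegree_X_sub_C]
  have hcd : c d = 1 := by
    rw [hcF, ← hFdeg]
    exact hFmonic.coeff_natDegree
  -- the key coefficient formula
  have key : ∀ i : Fin d, ∀ k : ℕ, k < d →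
      (g i).coeff (d - 1 - k) = ∑ t ∈ Finset.range (k + 1), c (d - t) * α i ^ (k - t) := by
    intro i k
    induction k with
    | zero =>
      intro _
      have : (g i).coeff (d - 1) = 1 := by
        have := (hgmonic i).coeff_natDegree
        rwa [hgdeg i] at this
      simp [this, hcd]
    | succ k ih =>
      intro hk
      have hk' : k < d := by omega
      have ihk := ih hk'
      -- coefficient recurrence from F = (X - C a) * g
      have hrec : (g i).coeff (d - 2 - k) =
          F.coeff (d - 1 - k) + α i * (g i).coeff (d - 1 - k) := by
        have h1 : F.coeff (d - 1 - k) = ((X - C (α i)) * g i).coeff (d - 1 - k) := by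
          rw [← hsplit i]
        have h2 : d - 1 - k = (d - 2 - k) + 1 := by omega
        rw [h2] at h1
        rw [sub_mul, coeff_sub, coeff_X_mul, coeff_C_mul] at h1
        rw [← h2] at h1
        rw [h1]; ring
      have hidx : d - 1 - (k + 1) = d - 2 - k := by omega
      have hsum : ∑ t ∈ Finset.range (k + 1), c (d - t) * α i ^ (k + 1 - t) =
          α i * ∑ t ∈ Finset.range (k + 1), c (d - t) * α i ^ (k - t) := by
        rw [Finset.mul_sum]
        refine Finset.sum_congr rfl fun t ht => ?_
        have := Finset.mem_range.mp ht
        have hexp : k + 1 - t = (k - t) + 1 := by omega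
        rw [hexp, pow_succ]; ring
      have hFc : F.coeff (d - 1 - k) = c (d - (k + 1)) := by
        rw [hcF]; congr 1; omega
      rw [hidx, hrec, ihk, hFc,
        Finset.sum_range_succ (fun t => c (d - t) * α i ^ (k + 1 - t)) (k + 1), hsum]
      simp only [Nat.sub_self, pow_zero, mul_one]
      ring
  -- T maps power vectors to coefficient vectors
  have himg : ∀ i : Fin d,
      T d c (fun k : Fin d => α i ^ (d - 1 - (k : ℕ))) =
        fun k : Fin d => (g i).coeff (d - 1 - (k : ℕ)) := by
    intro i
    funext k
    rw [T]
    have hk := k.isLt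
    rw [key i k hk]
    refine Finset.sum_congr rfl fun t ht => ?_
    have htk := Finset.mem_range.mp ht
    have hlt : d - 1 - (k : ℕ) + t < d := by omega
    have hexp : d - 1 - (d - 1 - (k : ℕ) + t) = (k : ℕ) - t := by omega
    have hz : zext d (fun k : Fin d => α i ^ (d - 1 - (k : ℕ))) (d - 1 - (k : ℕ) + t)
        = α i ^ ((k : ℕ) - t) := by
      rw [zext, dif_pos hlt]
      show α i ^ (d - 1 - (d - 1 - (k : ℕ) + t)) = _
      rw [hexp]
    rw [hz]
  -- Kf is the image of Cf under T
  have hKf : Kf = convexHull ℝ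
      (Set.range fun i : Fin d => fun k : Fin d => (g i).coeff (d - 1 - (k : ℕ))) := rfl
  have hrange : (Set.range fun i : Fin d => fun k : Fin d => (g i).coeff (d - 1 - (k : ℕ))) =
      T d c '' Set.range (fun i : Fin d => fun k : Fin d => α i ^ (d - 1 - (k : ℕ))) := by
    rw [← Set.range_comp]
    exact (congrArg Set.range (funext fun i => (himg i).symm)).symm ▸ rfl
  have hKC : Kf = T d c '' Cf := by
    rw [hKf, hrange, ← (T_linear d c).image_convexHull]
  have hset : Kf ∩ Zd = T d c '' (Cf ∩ Zd) := by
    ext y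
    constructor
    · rintro ⟨hyK, hyZ⟩
      rw [hKC] at hyK
      obtain ⟨x, hx, rfl⟩ := hyK
      have hxZ : ∀ k, ∃ n : ℤ, x k = n :=
        T_int_inv d c hcd hci x (fun k => hyZ k)
      exact ⟨x, ⟨hx, hxZ⟩, rfl⟩
    · rintro ⟨x, ⟨hxC, hxZ⟩, rfl⟩
      refine ⟨?_, ?_⟩
      · rw [hKC]; exact Set.mem_image_of_mem _ hxC
      · exact fun k => T_int_fwd d c hci x (fun k' => hxZ k') k
  have hcomp : IsCompact Cf := (Set.finite_range _).isCompact_convexHull (𝕜 := ℝ)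
  obtain ⟨Cb, hCb⟩ := isBounded_iff_forall_norm_le.mp hcomp.isBounded
  set B : ℤ := ⌈Cb⌉ with hB
  have hfinC : (Cf ∩ Zd).Finite := by
    have hS : (Set.univ.pi fun _ : Fin d => Set.Icc (-B) B).Finite :=
      Set.Finite.pi fun _ => Set.finite_Icc _ _
    refine Set.Finite.subset (hS.image fun (n : Fin d → ℤ) (k : Fin d) => (n k : ℝ)) ?_
    rintro v ⟨hvC, hvZ⟩
    choose n hn using hvZ
    refine ⟨n, fun k _ => ?_, ?_⟩
    · have h1 : ‖v k‖ ≤ Cb := le_trans (norm_le_pi_norm v k) (hCb v hvC)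
      rw [hn k, Real.norm_eq_abs] at h1
      have h2 : |(n k : ℝ)| ≤ (B : ℝ) := le_trans h1 (Int.le_ceil Cb)
      have h3 : |n k| ≤ B := by exact_mod_cast h2
      simpa [Set.mem_Icc] using abs_le.mp h3
    · funext k; exact (hn k).symm
  refine ⟨hfinC, ?_, ?_⟩
  · rw [hset]; exact hfinC.image _
  · rw [hset, Set.ncard_image_of_injective _ (T_inj d c hcd)]
end

section
/- Let f ∈ ℤ[X] be a monic irreducible polynomial of degree d ≥ 2 all of whose complex roots are real. If there exists a monic polynomial g ∈ ℤ[X] that interlaces f, then |Disc(f)| ≥ d^d, where Disc(f) denotes the discriminant of f. -/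
open Polynomial
open Finset

lemma natDegree_prod_X_sub_C' {m : ℕ} (γ : Fin m → ℝ) :
    (∏ i, (X - C (γ i))).natDegree = m := by
  rw [natDegree_prod _ _ (fun i _ => X_sub_C_ne_zero (γ i))]
  simp

lemma monic_prod_X_sub_C' {m : ℕ} (γ : Fin m → ℝ) :
    (∏ i, (X - C (γ i))).Monic :=
  monic_prod_of_monic _ _ (fun i _ => monic_X_sub_C (γ i))

lemma amgm_aux {m : ℕ} (hm : 0 < m) (c : Fin m → ℝ) (hc : ∀ i, 0 < c i)
    (hsum : ∑ i, c i = 1) : ∏ i, c i ≤ (1 / m) ^ m := by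
  have hw : ∀ i ∈ univ, (0:ℝ) ≤ (m:ℝ)⁻¹ := fun (_ : Fin m) _ => by positivity
  have hw' : ∑ _i : Fin m, (m:ℝ)⁻¹ = 1 := by
    simp [Finset.sum_const, Finset.card_univ]
    field_simp
  have hz : ∀ i ∈ univ, (0:ℝ) ≤ c i := fun i _ => (hc i).le
  have h := Real.geom_mean_le_arith_mean_weighted univ (fun _ => (m:ℝ)⁻¹) c hw hw' hz
  have h2 : (∏ i, c i) ^ ((m:ℝ)⁻¹) ≤ (m:ℝ)⁻¹ := by
    rw [← Real.finset_prod_rpow _ _ (fun i _ => (hc i).le)]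
    calc ∏ i, c i ^ ((m:ℝ)⁻¹) ≤ ∑ i, (m:ℝ)⁻¹ * c i := h
    _ = (m:ℝ)⁻¹ := by rw [← Finset.mul_sum, hsum, mul_one]
  have hprodpos : 0 < ∏ i, c i := Finset.prod_pos (fun i _ => hc i)
  have h3 := pow_le_pow_left₀ (by positivity) h2 m
  rw [← Real.rpow_natCast ((∏ i, c i) ^ ((m:ℝ)⁻¹)) m, ← Real.rpow_mul hprodpos.le,
    inv_mul_cancel₀ (by positivity : (m:ℝ) ≠ 0), Real.rpow_one] at h3
  rw [one_div]
  exact h3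

lemma exists_int_prod (f g : Polynomial ℤ) (hm : f.Monic) (hirr : Irreducible f)
    (hg0 : g ≠ 0) (hdeg : g.natDegree < f.natDegree) {m : ℕ} (α : Fin m → ℝ)
    (hα : Function.Injective α)
    (hf : f.map (Int.castRingHom ℝ) = ∏ i, (X - C (α i))) :
    ∃ N : ℤ, N ≠ 0 ∧ (N : ℝ) = ∏ i, (g.map (Int.castRingHom ℝ)).eval (α i) := by
  set q : Polynomial ℚ := f.map (Int.castRingHom ℚ) with hqdef
  have hq : q.Monic := hm.map _
  have hqirr : Irreducible q :=
    (Polynomial.IsPrimitive.Int.irreducible_iff_irreducible_map_cast hm.isPrimitive).mp hirr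
  haveI : Fact (Irreducible q) := ⟨hqirr⟩
  set K := AdjoinRoot q with hK
  set pb : PowerBasis ℚ K := AdjoinRoot.powerBasis hq.ne_zero with hpb
  haveI : FiniteDimensional ℚ K := pb.finite
  have hminpoly : minpoly ℚ pb.gen = q := by
    rw [hpb, AdjoinRoot.powerBasis_gen]
    exact (minpoly.eq_of_irreducible_of_monic hqirr
      (by have h0 := AdjoinRoot.aeval_eq (f := q) q
          rw [AdjoinRoot.mk_self] at h0; exact h0) hq).symm
  have hθq : aeval pb.gen q = 0 := by
    rw [hpb, AdjoinRoot.powerBasis_gen]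
    have h0 := AdjoinRoot.aeval_eq (f := q) q
    rw [AdjoinRoot.mk_self] at h0; exact h0
  have hθint : IsIntegral ℤ pb.gen := by
    refine ⟨f, hm, ?_⟩
    have h1 : aeval pb.gen f = 0 := by
      rw [← Polynomial.aeval_map_algebraMap ℚ pb.gen f]
      exact hθq
    simpa [Polynomial.aeval_def] using h1
  set x : K := aeval pb.gen g with hx
  have hxint : IsIntegral ℤ x := by
    have h1 : x ∈ Algebra.adjoin ℤ {pb.gen} := by
      rw [Algebra.adjoin_singleton_eq_range_aeval]
      exact ⟨g, rfl⟩
    have h2 : Algebra.adjoin ℤ {pb.gen} ≤ integralClosure ℤ K :=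
      Algebra.adjoin_le (Set.singleton_subset_iff.mpr hθint)
    exact h2 h1
  have hgq0 : g.map (Int.castRingHom ℚ) ≠ 0 := by
    intro h
    exact hg0 (Polynomial.map_injective _ (Int.cast_injective) (by simpa using h))
  have hx0 : x ≠ 0 := by
    intro h
    have h' : aeval pb.gen (g.map (algebraMap ℤ ℚ)) = 0 := by
      rw [Polynomial.aeval_map_algebraMap]; exact h
    have hdvd : minpoly ℚ pb.gen ∣ g.map (algebraMap ℤ ℚ) := minpoly.dvd ℚ _ h'
    rw [hminpoly] at hdvd
    have hle : q.natDegree ≤ (g.map (algebraMap ℤ ℚ)).natDegree :=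
      Polynomial.natDegree_le_of_dvd hdvd hgq0
    rw [hqdef] at hle
    rw [hm.natDegree_map, Polynomial.natDegree_map_eq_of_injective Int.cast_injective] at hle
    omega
  set N' : ℚ := Algebra.norm ℚ x with hN'
  have hN'int : IsIntegral ℤ N' := Algebra.isIntegral_norm ℚ hxint
  obtain ⟨N, hN⟩ := IsIntegrallyClosed.isIntegral_iff.mp hN'int
  have hN'0 : N' ≠ 0 := by
    rw [hN']
    exact (Algebra.norm_ne_zero_iff).mpr hx0
  refine ⟨N, ?_, ?_⟩
  · rintro rfl; apply hN'0; rw [← hN]; simp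
  -- now the embedding computation
  have hemb : algebraMap ℚ ℂ N' = ∏ σ : K →ₐ[ℚ] ℂ, σ x :=
    Algebra.norm_eq_prod_embeddings ℚ ℂ x
  have hσ : ∀ σ : K →ₐ[ℚ] ℂ, σ x = aeval (σ pb.gen) g := fun σ =>
    (Polynomial.aeval_algHom_apply (σ.restrictScalars ℤ) pb.gen g).symm
  have hreindex : ∏ σ : K →ₐ[ℚ] ℂ, σ x
      = ∏ y : {y : ℂ // y ∈ (minpoly ℚ pb.gen).aroots ℂ}, aeval (y : ℂ) g := by
    refine Fintype.prod_equiv pb.liftEquiv' _ _ (fun σ => ?_)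
    rw [hσ σ]
    congr 1
  have hcast : (minpoly ℚ pb.gen).aroots ℂ
      = (Finset.univ.val.map (fun i => (α i : ℂ))) := by
    have hmap : q.map (algebraMap ℚ ℂ) = ∏ i, (X - C ((α i : ℂ))) := by
      rw [hqdef, Polynomial.map_map]
      have h3 : (algebraMap ℚ ℂ).comp (Int.castRingHom ℚ)
          = (Complex.ofRealHom).comp (Int.castRingHom ℝ) := by
        ext1 <;> simp
      rw [h3, ← Polynomial.map_map, hf, Polynomial.map_prod]
      simp
    have h2 : (∏ i, (X - C ((α i : ℂ))))
        = (Multiset.map (fun t => X - C t)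
            (Finset.univ.val.map (fun i => (α i : ℂ)))).prod := by
      rw [Multiset.map_map]; rfl
    rw [hminpoly, aroots_def, hmap, h2, Polynomial.roots_multiset_prod_X_sub_C]
  have hsub : ∏ y : {y : ℂ // y ∈ (minpoly ℚ pb.gen).aroots ℂ}, aeval (y : ℂ) g
      = ∏ i, aeval ((α i : ℂ)) g := by
    rw [← Finset.prod_subtype ((minpoly ℚ pb.gen).aroots ℂ).toFinset
      (fun y => Multiset.mem_toFinset) (fun y : ℂ => aeval y g)]
    rw [hcast]
    have himg : (Finset.univ.val.map (fun i => (α i : ℂ))).toFinset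
        = Finset.image (fun i => (α i : ℂ)) Finset.univ := rfl
    rw [himg]
    exact Finset.prod_image (fun i _ j _ h =>
      hα (Complex.ofReal_injective h))
  have heval : ∀ i : Fin m, aeval ((α i : ℂ)) g
      = (((g.map (Int.castRingHom ℝ)).eval (α i) : ℝ) : ℂ) := by
    intro i
    rw [Polynomial.aeval_def, Polynomial.eval₂_eq_eval_map]
    have h4 : g.map (algebraMap ℤ ℂ)
        = (g.map (Int.castRingHom ℝ)).map Complex.ofRealHom := by
      rw [Polynomial.map_map]
      congr 1
    rw [h4, show ((α i : ℂ)) = Complex.ofRealHom (α i) from rfl, Polynomial.eval_map,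
      Polynomial.eval₂_hom]
    rfl
  have hfinal : ((N : ℝ) : ℂ)
      = ((∏ i, (g.map (Int.castRingHom ℝ)).eval (α i) : ℝ) : ℂ) := by
    have h5 : algebraMap ℚ ℂ N' = ((N : ℝ) : ℂ) := by
      rw [← hN]
      push_cast
      simp
    rw [← h5, hemb, hreindex, hsub]
    push_cast
    exact Finset.prod_congr rfl (fun i _ => heval i)
  exact_mod_cast hfinal

lemma step1 {m : ℕ} (γ : Fin m → ℝ) :
    (∏ i, ∏ j ∈ Finset.univ.filter (fun j => i < j), (γ i - γ j) ^ 2)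
      = ∏ i, ∏ j ∈ Finset.univ.erase i, |γ i - γ j| := by
  have hsplit : ∀ i : Fin m, Finset.univ.erase i
      = Finset.univ.filter (fun j => i < j) ∪ Finset.univ.filter (fun j => j < i) := by
    intro i
    ext j
    simp only [Finset.mem_erase, Finset.mem_union, Finset.mem_filter, Finset.mem_univ,
      true_and, and_true, Fin.lt_def, ← Fin.val_ne_iff]
    omega
  have hdisj : ∀ i : Fin m, Disjoint (Finset.univ.filter (fun j => i < j))
      (Finset.univ.filter (fun j : Fin m => j < i)) := by
    intro i
    rw [Finset.disjoint_left]
    intro j hj hj'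
    simp only [Finset.mem_filter, Finset.mem_univ, true_and] at hj hj'
    exact absurd (hj.trans hj') (lt_irrefl i)
  have hswap : (∏ i, ∏ j ∈ Finset.univ.filter (fun j => j < i), |γ i - γ j|)
      = ∏ i, ∏ j ∈ Finset.univ.filter (fun j => i < j), |γ i - γ j| := by
    rw [Finset.prod_comm' (t' := (Finset.univ : Finset (Fin m)))
      (s' := fun y => Finset.univ.filter (fun x => y < x)) (by simp)]
    exact Finset.prod_congr rfl fun i _ => Finset.prod_congr rfl fun j _ => abs_sub_comm _ _
  symm
  calc (∏ i, ∏ j ∈ Finset.univ.erase i, |γ i - γ j|)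
      = ∏ i, ((∏ j ∈ Finset.univ.filter (fun j => i < j), |γ i - γ j|) *
          ∏ j ∈ Finset.univ.filter (fun j => j < i), |γ i - γ j|) := by
        refine Finset.prod_congr rfl fun i _ => ?_
        rw [← Finset.prod_union (hdisj i), ← hsplit i]
    _ = (∏ i, ∏ j ∈ Finset.univ.filter (fun j => i < j), |γ i - γ j|) *
          ∏ i, ∏ j ∈ Finset.univ.filter (fun j => j < i), |γ i - γ j| :=
        Finset.prod_mul_distrib
    _ = ∏ i, ((∏ j ∈ Finset.univ.filter (fun j => i < j), |γ i - γ j|) *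
          ∏ j ∈ Finset.univ.filter (fun j => i < j), |γ i - γ j|) := by
        rw [hswap, ← Finset.prod_mul_distrib]
    _ = ∏ i, ∏ j ∈ Finset.univ.filter (fun j => i < j), (γ i - γ j) ^ 2 := by
        refine Finset.prod_congr rfl fun i _ => ?_
        rw [← Finset.prod_mul_distrib]
        refine Finset.prod_congr rfl fun j _ => ?_
        rw [abs_mul_abs_self, ← pow_two]

lemma step2 {m : ℕ} (γ : Fin m → ℝ) (hγ : Function.Injective γ) :
    (∏ i, ∏ j ∈ Finset.univ.erase i, |γ i - γ j|)
      = ∏ x ∈ Finset.image γ Finset.univ,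
          ∏ y ∈ (Finset.image γ Finset.univ).erase x, |x - y| := by
  symm
  rw [Finset.prod_image (fun i _ j _ h => hγ h)]
  refine Finset.prod_congr rfl fun i _ => ?_
  rw [← Finset.image_erase hγ, Finset.prod_image (fun i _ j _ h => hγ h)]

lemma image_eq_of_prod {m : ℕ} (γ δ : Fin m → ℝ)
    (h : (∏ i, (X - C (γ i))) = ∏ i, (X - C (δ i))) :
    Finset.image γ Finset.univ = Finset.image δ Finset.univ := by
  have e : ∀ ε : Fin m → ℝ, (∏ i, (X - C (ε i)))
      = (Multiset.map (fun t => X - C t) (Finset.univ.val.map ε)).prod := by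
    intro ε; rw [Multiset.map_map]; rfl
  have h1 : Finset.univ.val.map γ = Finset.univ.val.map δ := by
    rw [← Polynomial.roots_multiset_prod_X_sub_C (Finset.univ.val.map γ), ← e γ, h, e δ,
      Polynomial.roots_multiset_prod_X_sub_C]
  show (Finset.univ.val.map γ).toFinset = (Finset.univ.val.map δ).toFinset
  rw [h1]


/-- `g` interlaces `f`: `f` is monic of degree `n + 1 ≥ 2` with real roots
`α 0 < α 1 < ⋯ < α n`, `g` is monic of degree `n` with real roots `β 0, …, β (n-1)`,
and `α i < β i < α (i+1)` for all `i`. -/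
def Interlaces (g f : Polynomial ℤ) : Prop :=
  ∃ n : ℕ, 1 ≤ n ∧ ∃ (α : Fin (n + 1) → ℝ) (β : Fin n → ℝ),
    StrictMono α ∧
    f.map (Int.castRingHom ℝ) = ∏ i, (X - C (α i)) ∧
    g.map (Int.castRingHom ℝ) = ∏ i, (X - C (β i)) ∧
    ∀ i : Fin n, α i.castSucc < β i ∧ β i < α i.succ

/-- Let `f ∈ ℤ[X]` be monic irreducible of degree `d ≥ 2` with (distinct) real roots
`α 0, …, α (d-1)`.  If some monic integer polynomial interlaces `f`, then
`|Disc(f)| ≥ d^d`; since `f` is monic with real roots, `|Disc(f)| = ∏_{i<j} (α i − α j)²`. -/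
theorem statement13 (d : ℕ) (hd : 2 ≤ d) (f : Polynomial ℤ)
    (hm : f.Monic) (hirr : Irreducible f)
    (α : Fin d → ℝ) (hα : Function.Injective α)
    (hf : f.map (Int.castRingHom ℝ) = ∏ i, (X - C (α i)))
    (hint : ∃ g : Polynomial ℤ, Interlaces g f) :
    (d : ℝ) ^ d ≤ ∏ i, ∏ j ∈ Finset.univ.filter (fun j => i < j), (α i - α j) ^ 2 := by

  obtain ⟨g, n, hn, a, b, ha, hfa, hgb, hib⟩ := hint
  have hdeq : d = n + 1 := by
    have h1 := natDegree_prod_X_sub_C' α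
    have h2 := natDegree_prod_X_sub_C' a
    rw [← hf] at h1
    rw [← hfa] at h2
    omega
  subst hdeq
  have hainj : Function.Injective a := ha.injective
  set gR : Polynomial ℝ := g.map (Int.castRingHom ℝ) with hgR
  set P : Fin (n + 1) → ℝ := fun i => ∏ j ∈ Finset.univ.erase i, (a i - a j) with hPdef
  set G : Fin (n + 1) → ℝ := fun i => gR.eval (a i) with hGdef
  set c : Fin (n + 1) → ℝ := fun i => G i / P i with hcdef
  have hPne : ∀ i, P i ≠ 0 := by
    intro i
    rw [hPdef]
    refine Finset.prod_ne_zero_iff.mpr fun j hj => sub_ne_zero.mpr fun hh => ?_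
    exact (Finset.mem_erase.mp hj).1 (hainj hh).symm
  have hGeq : ∀ i, G i = ∏ j : Fin n, (a i - b j) := by
    intro i
    rw [hGdef]
    simp only [hgb, Polynomial.eval_prod, Polynomial.eval_sub, Polynomial.eval_X,
      Polynomial.eval_C]
  -- the reindexing map
  set E : Fin (n + 1) → Fin n → Fin (n + 1) :=
    fun i j => if (j : ℕ) < (i : ℕ) then j.castSucc else j.succ with hEdef
  have hEP : ∀ i, P i = ∏ j : Fin n, (a i - a (E i j)) := by
    intro i
    have hin : (i : ℕ) ≤ n := Nat.lt_succ_iff.mp i.isLt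
    rw [hPdef]
    refine (Finset.prod_nbij (fun j => E i j) ?_ ?_ ?_ ?_).symm
    · intro j _
      simp only [Finset.mem_erase, Finset.mem_univ, and_true, hEdef]
      split <;> rename_i h
      · exact ne_of_lt (by rwa [Fin.lt_def, Fin.coe_castSucc])
      · exact ne_of_gt (by rw [Fin.lt_def, Fin.val_succ]; omega)
    · intro x _ y _ hxy
      simp only [hEdef] at hxy
      have : (x:ℕ) = (y:ℕ) := by
        have hx := congrArg Fin.val hxy
        split at hx <;> split at hx <;>
          simp only [Fin.coe_castSucc, Fin.val_succ] at hx <;> omega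
      exact Fin.ext this
    · intro k hk
      have hki : (k : ℕ) ≠ (i : ℕ) := fun h => (Finset.mem_erase.mp hk).1 (Fin.ext h)
      have hkn : (k : ℕ) ≤ n := Nat.lt_succ_iff.mp k.isLt
      by_cases h : (k : ℕ) < (i : ℕ)
      · refine ⟨⟨(k : ℕ), by omega⟩, Finset.mem_coe.mpr (Finset.mem_univ _), ?_⟩
        simp only [hEdef, if_pos (show ((⟨(k:ℕ), by omega⟩ : Fin n) : ℕ) < (i:ℕ) from h)]
        apply Fin.ext; simp
      · refine ⟨⟨(k : ℕ) - 1, by omega⟩, Finset.mem_coe.mpr (Finset.mem_univ _), ?_⟩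
        have hcond : ¬ ((⟨(k:ℕ) - 1, by omega⟩ : Fin n) : ℕ) < (i:ℕ) := by simp; omega
        simp only [hEdef, if_neg hcond]
        apply Fin.ext; simp; omega
    · intro j _; rfl
  have hcpos : ∀ i, 0 < c i := by
    intro i
    have hin : (i : ℕ) ≤ n := Nat.lt_succ_iff.mp i.isLt
    rw [hcdef]
    show 0 < G i / P i
    rw [hGeq i, hEP i, ← Finset.prod_div_distrib]
    refine Finset.prod_pos fun j _ => ?_
    by_cases h : (j : ℕ) < (i : ℕ)
    · have hE : E i j = j.castSucc := by simp only [hEdef, if_pos h]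
      rw [hE]
      have h1 : b j < a i := lt_of_lt_of_le (hib j).2
        (ha.monotone (by rw [Fin.le_def, Fin.val_succ]; omega))
      have h2 : a j.castSucc < a i := ha (by rw [Fin.lt_def, Fin.coe_castSucc]; omega)
      exact div_pos (by linarith) (by linarith)
    · have hE : E i j = j.succ := by simp only [hEdef, if_neg h]
      rw [hE]
      have h1 : a i < b j := lt_of_le_of_lt
        (ha.monotone (by rw [Fin.le_def, Fin.coe_castSucc]; omega)) (hib j).1
      have h2 : a i < a j.succ := ha (by rw [Fin.lt_def, Fin.val_succ]; omega)
      exact div_pos_iff.mpr (Or.inr ⟨by linarith, by linarith⟩)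
  have hgRmonic : gR.Monic := by rw [hgb]; exact monic_prod_X_sub_C' b
  have hgRdeg : gR.natDegree = n := by rw [hgb]; exact natDegree_prod_X_sub_C' b
  have hsum : ∑ i, c i = 1 := by
    have hinj : Set.InjOn a (Finset.univ : Finset (Fin (n+1))) := fun x _ y _ h => hainj h
    have hdeglt : gR.degree < ((Finset.univ : Finset (Fin (n+1))).card : ℕ) := by
      rw [Polynomial.degree_eq_natDegree hgRmonic.ne_zero, hgRdeg, Finset.card_univ,
        Fintype.card_fin]
      exact_mod_cast Nat.lt_succ_self n
    have hinterp := Lagrange.eq_interpolate hinj hdeglt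
    have hco := congrArg (fun p : Polynomial ℝ => p.coeff n) hinterp
    simp only [Lagrange.interpolate_apply, Polynomial.finset_sum_coeff,
      Polynomial.coeff_C_mul] at hco
    have hbasis : ∀ i : Fin (n+1), (Lagrange.basis Finset.univ a i).coeff n = (P i)⁻¹ := by
      intro i
      have hb1 : Lagrange.basis Finset.univ a i
          = C (∏ j ∈ Finset.univ.erase i, (a i - a j)⁻¹) *
            ∏ j ∈ Finset.univ.erase i, (X - C (a j)) := by
        calc Lagrange.basis Finset.univ a i
            = ∏ j ∈ Finset.univ.erase i, (C ((a i - a j)⁻¹) * (X - C (a j))) := rfl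
          _ = (∏ j ∈ Finset.univ.erase i, C ((a i - a j)⁻¹)) *
              ∏ j ∈ Finset.univ.erase i, (X - C (a j)) := Finset.prod_mul_distrib
          _ = _ := by rw [map_prod]
      have hmon : (∏ j ∈ Finset.univ.erase i, (X - C (a j))).Monic :=
        monic_prod_of_monic _ _ fun _ _ => monic_X_sub_C _
      have hdeg2 : (∏ j ∈ Finset.univ.erase i, (X - C (a j))).natDegree = n := by
        rw [Polynomial.natDegree_prod _ _ (fun j _ => X_sub_C_ne_zero (a j))]
        simp [Finset.card_erase_of_mem]
      have h3 : (∏ j ∈ Finset.univ.erase i, (X - C (a j))).coeff n = 1 := by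
        have h4 := hmon.coeff_natDegree
        rwa [hdeg2] at h4
      rw [hb1, Polynomial.coeff_C_mul, h3, mul_one, Finset.prod_inv_distrib, hPdef]
    have hcoeff1 : gR.coeff n = 1 := by
      have h4 := hgRmonic.coeff_natDegree
      rwa [hgRdeg] at h4
    simp only [hcoeff1, hbasis] at hco
    rw [hcdef]
    simp only [div_eq_mul_inv, hGdef]
    exact hco.symm
  -- AM-GM
  have hamgm : (∏ i, c i) ≤ (1 / ((n+1 : ℕ) : ℝ)) ^ (n+1) :=
    amgm_aux (Nat.succ_pos n) c hcpos hsum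
  -- integrality
  have hfnat : f.natDegree = n + 1 := by
    rw [← hm.natDegree_map (Int.castRingHom ℝ), hf, natDegree_prod_X_sub_C']
  have hgnat : g.natDegree = n := by
    rw [← Polynomial.natDegree_map_eq_of_injective
      (show Function.Injective (Int.castRingHom ℝ) from Int.cast_injective) g, ← hgR, hgRdeg]
  have hg0 : g ≠ 0 := by
    intro h
    apply hgRmonic.ne_zero
    rw [hgR, h, Polynomial.map_zero]
  obtain ⟨N, hN0, hNval⟩ := exists_int_prod f g hm hirr hg0 (by omega) α hα hf
  have himage : Finset.image α Finset.univ = Finset.image a Finset.univ :=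
    image_eq_of_prod α a (by rw [← hf, hfa])
  have hprodG : ∏ i, G i = ∏ i, gR.eval (α i) := by
    rw [hGdef]
    calc (∏ i, gR.eval (a i))
        = ∏ x ∈ Finset.image a Finset.univ, gR.eval x :=
          (Finset.prod_image (f := fun x => gR.eval x) (g := a) (fun i _ j _ h => hainj h)).symm
      _ = ∏ x ∈ Finset.image α Finset.univ, gR.eval x := by rw [himage]
      _ = ∏ i, gR.eval (α i) :=
          Finset.prod_image (f := fun x => gR.eval x) (g := α) (fun i _ j _ h => hα h)
  have hNabs : 1 ≤ |∏ i, G i| := by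
    rw [hprodG, hgR, ← hNval]
    rw [← Int.cast_abs]
    exact_mod_cast Int.one_le_abs hN0
  -- target conversion
  rw [step1 α, step2 α hα, himage, ← step2 a hainj]
  set T : ℝ := ∏ i, ∏ j ∈ Finset.univ.erase i, |a i - a j| with hTdef
  have hTP : T = ∏ i, |P i| := by
    rw [hTdef, hPdef]
    exact Finset.prod_congr rfl fun i _ => (Finset.abs_prod _ _).symm
  have hT0 : 0 ≤ T := by
    rw [hTdef]
    exact Finset.prod_nonneg fun i _ =>
      Finset.prod_nonneg fun j _ => abs_nonneg _
  have hGabs : ∀ i, |G i| = c i * |P i| := by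
    intro i
    have hGi : G i = c i * P i := by
      rw [hcdef]
      exact (div_mul_cancel₀ (G i) (hPne i)).symm
    rw [hGi, abs_mul, abs_of_pos (hcpos i)]
  have h1 : 1 ≤ (∏ i, c i) * T := by
    calc (1:ℝ) ≤ |∏ i, G i| := hNabs
      _ = ∏ i, |G i| := Finset.abs_prod _ _
      _ = ∏ i, (c i * |P i|) := Finset.prod_congr rfl fun i _ => hGabs i
      _ = (∏ i, c i) * ∏ i, |P i| := Finset.prod_mul_distrib
      _ = (∏ i, c i) * T := by rw [hTP]
  have hmpos : (0:ℝ) < ((n+1 : ℕ) : ℝ) := by positivity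
  calc ((n+1 : ℕ) : ℝ) ^ (n+1)
      = ((n+1 : ℕ) : ℝ) ^ (n+1) * 1 := (mul_one _).symm
    _ ≤ ((n+1 : ℕ) : ℝ) ^ (n+1) * ((∏ i, c i) * T) :=
        mul_le_mul_of_nonneg_left h1 (by positivity)
    _ = (((n+1 : ℕ) : ℝ) ^ (n+1) * ∏ i, c i) * T := (mul_assoc _ _ _).symm
    _ ≤ (((n+1 : ℕ) : ℝ) ^ (n+1) * (1 / ((n+1 : ℕ) : ℝ)) ^ (n+1)) * T :=
        mul_le_mul_of_nonneg_right (mul_le_mul_of_nonneg_left hamgm (by positivity)) hT0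
    _ = T := by
        rw [← mul_pow, mul_one_div, div_self (ne_of_gt hmpos), one_pow, one_mul]
end

section
/- Let K be a totally real number field of degree d satisfying Condition (A), with ring of integers R and codifferent R^∨. Assume there exists a totally positive element of R^∨ of trace 1. If Q is a classical universal quadratic form of rank r over R, then r·d ≥ #{γ ∈ R^∨ : γ totally positive, Tr_{K/ℚ}(γ) = 1}. -/
open NumberField

/-- An element of a field is totally positive if every real embedding sends it to a
positive real. -/
def IsTotallyPositive {K : Type*} [Field K] (x : K) : Prop :=
  ∀ σ : K →+* ℝ, 0 < σ x

/-- A field is totally real if every complex embedding has real image. -/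
def IsTotallyRealField (K : Type*) [Field K] : Prop :=
  ∀ φ : K →+* ℂ, ∀ x : K, (φ x).im = 0

/-- The value of the quadratic form `∑_{i ≤ j} a i j * x i * x j` at the vector `v`. -/
def QFval {R : Type*} [CommRing R] {r : ℕ} (a : Fin r → Fin r → R) (v : Fin r → R) : R :=
  ∑ i : Fin r, ∑ j : Fin r, if i ≤ j then a i j * v i * v j else 0

/-- A quadratic form (given by its upper-triangular coefficients `a` over the ring of
integers of `K`) is universal if it is totally positive definite and represents every
totally positive algebraic integer of `K`. -/
def IsUniversalQF {K : Type*} [Field K] {r : ℕ}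
    (a : Fin r → Fin r → 𝓞 K) : Prop :=
  (∀ v : Fin r → 𝓞 K, v ≠ 0 →
    IsTotallyPositive (algebraMap (𝓞 K) K (QFval a v))) ∧
  (∀ α : 𝓞 K, IsTotallyPositive (algebraMap (𝓞 K) K α) →
    ∃ v : Fin r → 𝓞 K, QFval a v = α)

/-- Condition (A): the field is monogenic and its ring of integers has units of every
signature. -/
def ConditionA (K : Type*) [Field K] : Prop :=
  (∃ θ : 𝓞 K, Algebra.adjoin ℤ ({θ} : Set (𝓞 K)) = ⊤) ∧
  (∀ ε : (K →+* ℝ) → Bool, ∃ u : (𝓞 K)ˣ,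
    ∀ σ : K →+* ℝ, (0 < σ (algebraMap (𝓞 K) K u) ↔ ε σ = true))

/-- An element of `K` lies in the codifferent of the ring of integers `R` of `K` iff
`Tr_{K/ℚ}(γ x) ∈ ℤ` for every `x ∈ R`. -/
def InCodifferent {K : Type*} [Field K] [Algebra ℚ K] (γ : K) : Prop :=
  ∀ x : 𝓞 K, ∃ n : ℤ, Algebra.trace ℚ K (γ * algebraMap (𝓞 K) K x) = n

section Helpers

open Polynomial Pointwise


variable {K : Type} [Field K] [NumberField K]

noncomputable def realEquiv (htr : IsTotallyRealField K) : (K →+* ℝ) ≃ (K →+* ℂ) where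
  toFun σ := Complex.ofRealHom.comp σ
  invFun φ := {
    toFun := fun x => (φ x).re
    map_one' := by simp
    map_mul' := fun x y => by
      have hx := htr φ x; have hy := htr φ y
      simp [Complex.mul_re, hx, hy]
    map_zero' := by simp
    map_add' := fun x y => by simp }
  left_inv σ := by ext x; simp
  right_inv φ := by
    ext x
    apply Complex.ext <;> simp [htr φ x]

lemma trace_eq_sum_real (htr : IsTotallyRealField K) [Fintype (K →+* ℝ)] (x : K) :
    algebraMap ℚ ℝ (Algebra.trace ℚ K x) = ∑ σ : K →+* ℝ, σ x := by
  have h1 : (algebraMap ℚ ℂ) (Algebra.trace ℚ K x) = ∑ φ : K →ₐ[ℚ] ℂ, φ x :=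
    trace_eq_sum_embeddings ℂ
  have h2 : ∑ φ : K →ₐ[ℚ] ℂ, φ x = ∑ φ : K →+* ℂ, φ x :=
    Fintype.sum_equiv (RingHom.equivRatAlgHom K ℂ).symm _ _ (fun φ => rfl)
  have h3 : ∑ φ : K →+* ℂ, φ x = ∑ σ : K →+* ℝ, Complex.ofRealHom (σ x) :=
    (Fintype.sum_equiv (realEquiv htr) _ _ (fun σ => rfl)).symm
  apply Complex.ofReal_injective
  have h0 : ((algebraMap ℚ ℝ (Algebra.trace ℚ K x) : ℝ) : ℂ)
      = algebraMap ℚ ℂ (Algebra.trace ℚ K x) := by simp [Complex.ofReal_ratCast]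
  rw [h0, h1, h2, h3, Complex.ofReal_sum]
  rfl

lemma nonempty_real_embedding (htr : IsTotallyRealField K) : Nonempty (K →+* ℝ) := by
  have : Nonempty (K →+* ℂ) := by
    rw [← Fintype.card_pos_iff, NumberField.Embeddings.card K ℂ]
    exact Module.finrank_pos
  exact this.map (realEquiv htr).symm

lemma trace_pos_of_tp (htr : IsTotallyRealField K) [Fintype (K →+* ℝ)] {z : K}
    (hz : IsTotallyPositive z) : 0 < Algebra.trace ℚ K z := by
  have h : (0:ℝ) < algebraMap ℚ ℝ (Algebra.trace ℚ K z) := by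
    rw [trace_eq_sum_real htr]
    have := nonempty_real_embedding htr
    exact Finset.sum_pos (fun σ _ => hz σ) Finset.univ_nonempty
  rw [eq_ratCast] at h
  exact_mod_cast h

lemma trace_int_mul (m : ℤ) (z : K) :
    Algebra.trace ℚ K ((m : K) * z) = m * Algebra.trace ℚ K z := by
  have h : ((m : K)) = algebraMap ℚ K ((m : ℚ)) := by rw [map_intCast]
  rw [h, ← Algebra.smul_def, map_smul, smul_eq_mul]

lemma deriv_minpoly_ne_zero (x : K) : aeval x (derivative (minpoly ℚ x)) ≠ 0 := by
  have hsep : (minpoly ℚ x).Separable := Algebra.IsSeparable.isSeparable ℚ x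
  obtain ⟨p, q, hpq⟩ := hsep
  intro h0
  have := congrArg (aeval x) hpq
  simp only [map_add, map_mul, map_one, minpoly.aeval, mul_zero, h0, add_zero, zero_add] at this
  exact one_ne_zero this.symm

lemma codiff_char (θ : 𝓞 K) (hθ : Algebra.adjoin ℤ ({θ} : Set (𝓞 K)) = ⊤) (γ : K) :
    InCodifferent γ ↔ ∃ β : 𝓞 K,
      γ = (aeval (algebraMap (𝓞 K) K θ) (derivative <| minpoly ℚ (algebraMap (𝓞 K) K θ)))⁻¹
        * algebraMap (𝓞 K) K β := by
  set x : K := algebraMap (𝓞 K) K θ with hxdef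
  have hmap : Algebra.adjoin ℤ ({x} : Set K)
      = (Algebra.adjoin ℤ ({θ} : Set (𝓞 K))).map (algebraMap (𝓞 K) K).toIntAlgHom := by
    rw [AlgHom.map_adjoin]
    simp [hxdef]
  have hmem : ∀ y : K, y ∈ Algebra.adjoin ℤ ({x} : Set K) ↔ ∃ β : 𝓞 K,
      algebraMap (𝓞 K) K β = y := by
    intro y
    rw [hmap, hθ]
    simp [Algebra.mem_top, Subalgebra.mem_map]
  have hadj : Algebra.adjoin ℚ ({x} : Set K) = ⊤ := by
    rw [eq_top_iff]
    intro z _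
    have halg : IsAlgebraic ℤ z :=
      (IsFractionRing.isAlgebraic_iff ℤ ℚ K).mpr (Algebra.IsAlgebraic.isAlgebraic z)
    obtain ⟨y, hy0, hint⟩ := halg.exists_integral_multiple
    obtain ⟨w, hyz⟩ : ∃ w : integralClosure ℤ K, algebraMap ℤ K y * z = w :=
      ⟨⟨y • z, hint⟩, by simp [zsmul_eq_mul]⟩
    have hwK : ((w : K)) ∈ Algebra.adjoin ℚ ({x} : Set K) := by
      have h1 : (⟨(w : K), w.2⟩ : 𝓞 K) ∈ Algebra.adjoin ℤ ({θ} : Set (𝓞 K)) := by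
        rw [hθ]; trivial
      rw [Algebra.adjoin_singleton_eq_range_aeval] at h1
      obtain ⟨p, hp⟩ := h1
      have hp' : aeval θ p = (⟨(w : K), w.2⟩ : 𝓞 K) := hp
      have hx' : aeval x (p.map (algebraMap ℤ ℚ)) = (w : K) := by
        rw [aeval_map_algebraMap, hxdef, aeval_algebraMap_apply, hp']
        rfl
      rw [Algebra.adjoin_singleton_eq_range_aeval]
      exact ⟨p.map (algebraMap ℤ ℚ), hx'⟩
    have hy : (y : K) ≠ 0 := by
      intro h
      exact hy0 (by exact_mod_cast h)
    have hz : z = ((y : ℚ)⁻¹) • ((w : K)) := by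
      rw [Algebra.smul_def, map_inv₀, ← hyz]
      rw [map_intCast (algebraMap ℚ K) y]
      rw [show (algebraMap ℤ K) y = (y : K) from by rw [algebraMap_int_eq]; rfl]
      rw [inv_mul_cancel_left₀ hy]
    rw [hz]
    exact Subalgebra.smul_mem _ hwK _
  have hxint : IsIntegral ℤ x := RingOfIntegers.isIntegral_coe θ
  have hdual := traceForm_dualSubmodule_adjoin ℤ ℚ hadj hxint
  have hmemdual : ∀ γ : K, InCodifferent γ ↔
      γ ∈ (Algebra.traceForm ℚ K).dualSubmodule
        (Subalgebra.toSubmodule (Algebra.adjoin ℤ ({x} : Set K))) := by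
    intro γ
    rw [LinearMap.BilinForm.mem_dualSubmodule]
    constructor
    · intro h y hy
      obtain ⟨β, rfl⟩ := (hmem y).mp hy
      obtain ⟨n, hn⟩ := h β
      rw [Submodule.mem_one]
      refine ⟨n, ?_⟩
      rw [Algebra.traceForm_apply, hn]
      simp
    · intro h β
      have := h (algebraMap (𝓞 K) K β) ((hmem _).mpr ⟨β, rfl⟩)
      rw [Submodule.mem_one] at this
      obtain ⟨n, hn⟩ := this
      rw [Algebra.traceForm_apply] at hn
      exact ⟨n, by rw [← hn]; simp⟩
  rw [hmemdual, hdual]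
  rw [← SetLike.mem_coe, Submodule.coe_pointwise_smul, Set.mem_smul_set]
  constructor
  · rintro ⟨m, hm, rfl⟩
    obtain ⟨β, rfl⟩ := (hmem m).mp hm
    exact ⟨β, by rw [smul_eq_mul]⟩
  · rintro ⟨β, rfl⟩
    exact ⟨algebraMap (𝓞 K) K β, (hmem _).mpr ⟨β, rfl⟩, by rw [smul_eq_mul]⟩

/-- For fixed `c`, `g`, `X`, the map `Y ↦ Tr(c * ∑ i j, g i j * X i * Y j)` is `ℚ`-linear. -/
noncomputable def phiK {r : ℕ} (c : K) (g : Fin r → Fin r → K) (X : Fin r → K) :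
    (Fin r → K) →ₗ[ℚ] ℚ where
  toFun Y := Algebra.trace ℚ K (c * ∑ i : Fin r, ∑ j : Fin r, g i j * X i * Y j)
  map_add' Y Z := by
    have h2 : c * (∑ i : Fin r, ∑ j : Fin r, g i j * X i * ((Y + Z) j))
        = c * (∑ i : Fin r, ∑ j : Fin r, g i j * X i * Y j)
          + c * (∑ i : Fin r, ∑ j : Fin r, g i j * X i * Z j) := by
      rw [← mul_add]
      congr 1
      rw [← Finset.sum_add_distrib]
      refine Finset.sum_congr rfl fun i _ => ?_
      rw [← Finset.sum_add_distrib]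
      refine Finset.sum_congr rfl fun j _ => ?_
      simp only [Pi.add_apply]
      ring
    rw [h2, map_add]
  map_smul' q Y := by
    simp only [RingHom.id_apply]
    show Algebra.trace ℚ K _ = _
    have h2 : c * ∑ i : Fin r, ∑ j : Fin r, g i j * X i * ((q • Y) j)
        = q • (c * ∑ i : Fin r, ∑ j : Fin r, g i j * X i * Y j) := by
      simp only [Pi.smul_apply, mul_smul_comm, ← Finset.smul_sum]
    rw [h2, LinearMap.map_smul, smul_eq_mul]


end Helpers

section Main

open Polynomial Pointwise

/-- Let `K` be a totally real number field of degree `d` satisfying Condition (A), whose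
codifferent contains a totally positive element of trace `1`.  If there is a classical
universal quadratic form of rank `r` over the ring of integers of `K`, then `r·d` is at
least the number of totally positive elements of the codifferent of trace `1`. -/
theorem statement18 (K : Type) [Field K] [NumberField K]
    (htr : IsTotallyRealField K) (d : ℕ) (hd : Module.finrank ℚ K = d)
    (hA : ConditionA K)
    (hex : ∃ γ : K, IsTotallyPositive γ ∧ InCodifferent γ ∧ Algebra.trace ℚ K γ = 1)
    (r : ℕ) (a : Fin r → Fin r → 𝓞 K)
    (hclassical : ∀ i j : Fin r, i < j → ∃ b : 𝓞 K, a i j = 2 * b)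
    (huniv : IsUniversalQF a) :
    {γ : K | IsTotallyPositive γ ∧ InCodifferent γ ∧
      Algebra.trace ℚ K γ = 1}.Finite ∧
    {γ : K | IsTotallyPositive γ ∧ InCodifferent γ ∧
      Algebra.trace ℚ K γ = 1}.ncard ≤ r * d := by
  classical
  obtain ⟨⟨θ, hθ⟩, hunits⟩ := hA
  letI : Fintype (K →+* ℝ) := Fintype.ofEquiv _ (realEquiv htr).symm
  set S : Set K := {γ : K | IsTotallyPositive γ ∧ InCodifferent γ ∧
      Algebra.trace ℚ K γ = 1} with hSdef
  set x : K := algebraMap (𝓞 K) K θ with hxdef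
  set x' : K := aeval x (derivative (minpoly ℚ x)) with hx'def
  have hx'0 : x' ≠ 0 := deriv_minpoly_ne_zero x
  have hcd : ∀ γ : K, InCodifferent γ ↔ ∃ β : 𝓞 K, γ = x'⁻¹ * algebraMap (𝓞 K) K β :=
    codiff_char θ hθ
  obtain ⟨u, hu⟩ := hunits (fun σ => decide (0 < σ x'))
  set c : K := x'⁻¹ * algebraMap (𝓞 K) K (u : 𝓞 K) with hcdef
  have humap : algebraMap (𝓞 K) K ((u : 𝓞 K)) * algebraMap (𝓞 K) K ((u⁻¹ : (𝓞 K)ˣ) : 𝓞 K)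
      = 1 := by
    rw [← map_mul]
    rw [show ((u : 𝓞 K) * ((u⁻¹ : (𝓞 K)ˣ) : 𝓞 K)) = 1 from by exact_mod_cast u.mul_inv]
    exact map_one _
  have humap0 : algebraMap (𝓞 K) K (u : 𝓞 K) ≠ 0 := by
    intro h2
    have h3 := humap
    rw [h2, zero_mul] at h3
    exact zero_ne_one h3
  -- total positivity of c
  have hcpos : IsTotallyPositive c := by
    intro σ
    have hx'ne : σ x' ≠ 0 := fun h => hx'0 (σ.injective (by rw [h, map_zero]))
    have hune : σ (algebraMap (𝓞 K) K (u : 𝓞 K)) ≠ 0 := fun h =>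
      humap0 (σ.injective (by rw [h, map_zero]))
    rw [hcdef, map_mul, map_inv₀]
    rcases hx'ne.lt_or_gt with hneg | hpos
    · have hufalse : ¬ (0 < σ (algebraMap (𝓞 K) K (u : 𝓞 K))) := by
        rw [hu σ]
        simp [not_lt.mpr hneg.le]
      have huneg : σ (algebraMap (𝓞 K) K (u : 𝓞 K)) < 0 :=
        lt_of_le_of_ne (not_lt.mp hufalse) hune
      exact mul_pos_of_neg_of_neg (inv_lt_zero.mpr hneg) huneg
    · have hupos : 0 < σ (algebraMap (𝓞 K) K (u : 𝓞 K)) := by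
        rw [hu σ]
        simp [hpos]
      exact mul_pos (inv_pos.mpr hpos) hupos
  -- codifferent = c • 𝓞 K
  have hccod : ∀ γ : K, InCodifferent γ ↔ ∃ β : 𝓞 K, γ = c * algebraMap (𝓞 K) K β := by
    intro γ
    rw [hcd γ]
    constructor
    · rintro ⟨β, rfl⟩
      refine ⟨((u⁻¹ : (𝓞 K)ˣ) : 𝓞 K) * β, ?_⟩
      rw [hcdef, map_mul]
      calc x'⁻¹ * algebraMap (𝓞 K) K β
          = x'⁻¹ * algebraMap (𝓞 K) K (u : 𝓞 K)
            * (algebraMap (𝓞 K) K ((u⁻¹ : (𝓞 K)ˣ) : 𝓞 K) * algebraMap (𝓞 K) K β) := by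
            rw [show x'⁻¹ * algebraMap (𝓞 K) K (u : 𝓞 K)
              * (algebraMap (𝓞 K) K ((u⁻¹ : (𝓞 K)ˣ) : 𝓞 K) * algebraMap (𝓞 K) K β)
              = x'⁻¹ * ((algebraMap (𝓞 K) K (u : 𝓞 K)
                * algebraMap (𝓞 K) K ((u⁻¹ : (𝓞 K)ˣ) : 𝓞 K)) * algebraMap (𝓞 K) K β)
              from by ring, humap, one_mul]
        _ = x'⁻¹ * algebraMap (𝓞 K) K (u : 𝓞 K)
            * algebraMap (𝓞 K) K (((u⁻¹ : (𝓞 K)ˣ) : 𝓞 K) * β) := by rw [map_mul]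
    · rintro ⟨β, rfl⟩
      refine ⟨(u : 𝓞 K) * β, ?_⟩
      rw [hcdef, map_mul]
      ring
  have hcInC : InCodifferent c := (hccod c).mpr ⟨1, by simp⟩
  -- trace bounds
  have tint : ∀ z : 𝓞 K, ∃ n : ℤ,
      Algebra.trace ℚ K (c * algebraMap (𝓞 K) K z) = n := hcInC
  have tge1 : ∀ z : 𝓞 K, IsTotallyPositive (algebraMap (𝓞 K) K z) →
      1 ≤ Algebra.trace ℚ K (c * algebraMap (𝓞 K) K z) := by
    intro z hz
    obtain ⟨n, hn⟩ := tint z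
    have hpos : 0 < Algebra.trace ℚ K (c * algebraMap (𝓞 K) K z) := by
      refine trace_pos_of_tp htr ?_
      intro σ
      rw [map_mul]
      exact mul_pos (hcpos σ) (hz σ)
    rw [hn] at hpos ⊢
    have : (0:ℤ) < n := by exact_mod_cast hpos
    exact_mod_cast this
  -- symmetric Gram matrix
  set G : Fin r → Fin r → 𝓞 K := fun i j =>
    if h : i < j then (hclassical i j h).choose
    else if h' : j < i then (hclassical j i h').choose
    else a i i with hGdef
  have hGsymm : ∀ i j, G i j = G j i := by
    intro i j
    rcases lt_trichotomy i j with h | h | h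
    · simp only [hGdef]
      rw [dif_pos h, dif_neg (asymm h), dif_pos h]
    · subst h; rfl
    · simp only [hGdef]
      rw [dif_neg (asymm h), dif_pos h, dif_pos h]
  have hGa : ∀ i j : Fin r, i < j → a i j = 2 * G i j := by
    intro i j h
    simp only [hGdef]
    rw [dif_pos h]
    exact (hclassical i j h).choose_spec
  have hGdiag : ∀ i, G i i = a i i := by
    intro i
    simp only [hGdef]
    rw [dif_neg (lt_irrefl i), dif_neg (lt_irrefl i)]
  set Bil : (Fin r → 𝓞 K) → (Fin r → 𝓞 K) → 𝓞 K :=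
    fun v w => ∑ i : Fin r, ∑ j : Fin r, G i j * v i * w j with hBdef
  have hBil_symm : ∀ v w, Bil v w = Bil w v := by
    intro v w
    rw [hBdef]
    simp only
    rw [Finset.sum_comm]
    refine Finset.sum_congr rfl fun i _ => Finset.sum_congr rfl fun j _ => ?_
    rw [hGsymm j i]
    ring
  -- QFval equals the symmetric bilinear form on the diagonal
  have hQB : ∀ v, QFval a v = Bil v v := by
    intro v
    have h2 : QFval a v + QFval a v = Bil v v + Bil v v := by
      have hswap : QFval a v
          = ∑ i : Fin r, ∑ j : Fin r, (if j ≤ i then a j i * v j * v i else 0) := by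
        rw [QFval, Finset.sum_comm]
      calc QFval a v + QFval a v
          = (∑ i : Fin r, ∑ j : Fin r, (if i ≤ j then a i j * v i * v j else 0))
            + ∑ i : Fin r, ∑ j : Fin r, (if j ≤ i then a j i * v j * v i else 0) := by
            rw [← hswap]
            rfl
        _ = ∑ i : Fin r, ∑ j : Fin r,
              ((if i ≤ j then a i j * v i * v j else 0)
                + (if j ≤ i then a j i * v j * v i else 0)) := by
            rw [← Finset.sum_add_distrib]
            refine Finset.sum_congr rfl fun i _ => ?_
            rw [← Finset.sum_add_distrib]
        _ = ∑ i : Fin r, ∑ j : Fin r, (2 * (G i j * v i * v j)) := by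
            refine Finset.sum_congr rfl fun i _ => Finset.sum_congr rfl fun j _ => ?_
            rcases lt_trichotomy i j with h | h | h
            · rw [if_pos h.le, if_neg (not_le.mpr h), hGa i j h]; ring
            · subst h
              rw [if_pos le_rfl, hGdiag]; ring
            · rw [if_neg (not_le.mpr h), if_pos h.le, hGa j i h, hGsymm i j]; ring
        _ = Bil v v + Bil v v := by
            rw [hBdef]
            simp only [two_mul, Finset.sum_add_distrib]
    have h3 : (2 : 𝓞 K) * QFval a v = 2 * Bil v v := by
      rw [two_mul, two_mul]; exact h2
    exact mul_left_cancel₀ (by norm_num : (2 : 𝓞 K) ≠ 0) h3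
  -- bilinearity helpers
  have hBil_sub_left : ∀ v w z, Bil (fun i => v i - w i) z = Bil v z - Bil w z := by
    intro v w z
    rw [hBdef]
    simp only
    rw [← Finset.sum_sub_distrib]
    refine Finset.sum_congr rfl fun i _ => ?_
    rw [← Finset.sum_sub_distrib]
    refine Finset.sum_congr rfl fun j _ => ?_
    ring
  have hBil_smul_left : ∀ (m : 𝓞 K) v z, Bil (fun i => m * v i) z = m * Bil v z := by
    intro m v z
    rw [hBdef]
    simp only
    rw [Finset.mul_sum]
    refine Finset.sum_congr rfl fun i _ => ?_
    rw [Finset.mul_sum]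
    refine Finset.sum_congr rfl fun j _ => ?_
    ring
  have hBil_sub_right : ∀ v w z, Bil z (fun i => v i - w i) = Bil z v - Bil z w := by
    intro v w z
    rw [hBil_symm, hBil_sub_left, hBil_symm v z, hBil_symm w z]
  have hBil_smul_right : ∀ (m : 𝓞 K) v z, Bil z (fun i => m * v i) = m * Bil z v := by
    intro m v z
    rw [hBil_symm, hBil_smul_left, hBil_symm v z]
  -- the set of totally positive integers of trace-against-c equal to 1
  set As : Set (𝓞 K) := {α : 𝓞 K | IsTotallyPositive (algebraMap (𝓞 K) K α) ∧
      Algebra.trace ℚ K (c * algebraMap (𝓞 K) K α) = 1} with hAsdef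
  -- choose representations
  have hrepex : ∀ α : ↥As, ∃ v : Fin r → 𝓞 K, QFval a v = ↑α := fun α => huniv.2 α α.2.1
  set wv : ↥As → (Fin r → 𝓞 K) := fun α => (hrepex α).choose with hwvdef
  have hwv : ∀ α : ↥As, QFval a (wv α) = ↑α := fun α => (hrepex α).choose_spec
  -- trace of c times the bilinear pairing of two representative vectors
  have horth : ∀ α β : ↥As, α ≠ β →
      Algebra.trace ℚ K (c * algebraMap (𝓞 K) K (Bil (wv α) (wv β))) = 0 := by
    intro α β hne
    obtain ⟨m, hm⟩ := tint (Bil (wv α) (wv β))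
    set v : Fin r → 𝓞 K := fun i => wv β i - (m : 𝓞 K) * wv α i with hvdef
    have hexp : QFval a v
        = QFval a (wv β) - 2 * (m : 𝓞 K) * Bil (wv α) (wv β)
          + (m : 𝓞 K) * (m : 𝓞 K) * QFval a (wv α) := by
      rw [hQB, hQB, hQB, hvdef]
      rw [hBil_sub_left, hBil_smul_left]
      rw [hBil_sub_right, hBil_sub_right, hBil_smul_right, hBil_smul_right]
      rw [hBil_symm (wv β) (wv α)]
      ring
    have htr_exp : Algebra.trace ℚ K (c * algebraMap (𝓞 K) K (QFval a v))
        = 1 - 2 * (m:ℚ) * (m:ℚ) + (m:ℚ) * (m:ℚ) := by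
      have hmap : c * algebraMap (𝓞 K) K (QFval a v)
          = c * algebraMap (𝓞 K) K (QFval a (wv β))
            - ((2 * m : ℤ) : K) * (c * algebraMap (𝓞 K) K (Bil (wv α) (wv β)))
            + ((m * m : ℤ) : K) * (c * algebraMap (𝓞 K) K (QFval a (wv α))) := by
        rw [hexp]
        simp only [map_add, map_sub, map_mul, map_intCast, map_ofNat]
        push_cast
        ring
      rw [hmap]
      rw [map_add (Algebra.trace ℚ K), map_sub (Algebra.trace ℚ K)]
      rw [trace_int_mul, trace_int_mul, hm, hwv, hwv, α.2.2, β.2.2]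
      push_cast
      ring
    by_cases hv : v = 0
    · exfalso
      -- then wv β = m • wv α and β = m² α, forcing α = β
      have hwβ : ∀ i, wv β i = (m : 𝓞 K) * wv α i := by
        intro i
        have h5 := congrFun hv i
        simp only [hvdef, Pi.zero_apply] at h5
        exact sub_eq_zero.mp h5
      have hβα : (β : 𝓞 K) = (m : 𝓞 K) * (m : 𝓞 K) * (α : 𝓞 K) := by
        rw [← hwv β, ← hwv α, hQB, hQB]
        rw [show wv β = fun i => (m : 𝓞 K) * wv α i from funext hwβ]
        rw [hBil_smul_left, hBil_smul_right]
        ring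
      have h1 := β.2.2
      have hmapβ : c * algebraMap (𝓞 K) K (β : 𝓞 K)
          = ((m * m : ℤ) : K) * (c * algebraMap (𝓞 K) K (α : 𝓞 K)) := by
        rw [hβα]
        simp only [map_mul, map_intCast]
        push_cast
        ring
      rw [hmapβ, trace_int_mul, α.2.2, mul_one] at h1
      have hm2 : m * m = 1 := by exact_mod_cast h1
      have hβeqα : (β : 𝓞 K) = (α : 𝓞 K) := by
        rw [hβα, show ((m : 𝓞 K) * (m : 𝓞 K)) = ((m * m : ℤ) : 𝓞 K) from by push_cast; ring,
          hm2]
        push_cast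
        ring
      exact hne (Subtype.ext hβeqα.symm)
    · have h1 := tge1 (QFval a v) (huniv.1 v hv)
      rw [htr_exp] at h1
      have hm0 : (m:ℚ) = 0 := by nlinarith
      have : m = 0 := by exact_mod_cast hm0
      rw [hm, this]
      norm_num
  -- diagonal values
  have hdiag : ∀ α : ↥As,
      Algebra.trace ℚ K (c * algebraMap (𝓞 K) K (Bil (wv α) (wv α))) = 1 := by
    intro α
    rw [← hQB, hwv]
    exact α.2.2
  set gm : Fin r → Fin r → K := fun i j => algebraMap (𝓞 K) K (G i j) with hgmdef
  set W : ↥As → (Fin r → K) := fun α i => algebraMap (𝓞 K) K (wv α i) with hWdef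
  have hmapBil : ∀ α β : ↥As, algebraMap (𝓞 K) K (Bil (wv α) (wv β))
      = ∑ i : Fin r, ∑ j : Fin r, gm i j * W α i * W β j := by
    intro α β
    rw [hBdef]
    simp only
    rw [map_sum]
    refine Finset.sum_congr rfl fun i _ => ?_
    rw [map_sum]
    refine Finset.sum_congr rfl fun j _ => ?_
    rw [map_mul, map_mul]
  have hphi : ∀ α β : ↥As, phiK c gm (W α) (W β)
      = Algebra.trace ℚ K (c * algebraMap (𝓞 K) K (Bil (wv α) (wv β))) := by
    intro α β
    have h6 : phiK c gm (W α) (W β)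
        = Algebra.trace ℚ K (c * ∑ i : Fin r, ∑ j : Fin r, gm i j * W α i * W β j) := rfl
    rw [h6, ← hmapBil]
  -- linear independence of the representative vectors
  have hli : LinearIndependent ℚ W := by
    rw [linearIndependent_iff']
    intro s g hsum j hj
    have h0 : phiK c gm (W j) (∑ i ∈ s, g i • W i) = 0 := by rw [hsum, map_zero]
    rw [map_sum] at h0
    have hterm : ∀ i ∈ s, phiK c gm (W j) (g i • W i) = if i = j then g i else 0 := by
      intro i hi
      rw [map_smul, smul_eq_mul]
      by_cases h : i = j
      · subst h
        rw [if_pos rfl, hphi, hdiag, mul_one]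
      · rw [if_neg h, hphi, horth j i (Ne.symm h), mul_zero]
    rw [Finset.sum_congr rfl hterm, Finset.sum_ite_eq' s j g, if_pos hj] at h0
    exact h0
  -- cardinality of As
  have hfinAs : As.Finite := by
    have : Finite ↥As := hli.finite
    exact Set.finite_coe_iff.mp this
  have hcardAs : As.ncard ≤ r * d := by
    haveI : Fintype ↥As := hfinAs.fintype
    have h1 : Fintype.card ↥As ≤ Module.finrank ℚ (Fin r → K) :=
      hli.fintype_card_le_finrank
    have h2 : Module.finrank ℚ (Fin r → K) = r * d := by
      rw [Module.finrank_pi_fintype ℚ]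
      simp [hd, Finset.sum_const, mul_comm]
    calc As.ncard = Nat.card ↥As := (Nat.card_coe_set_eq As).symm
      _ = Fintype.card ↥As := Nat.card_eq_fintype_card
      _ ≤ Module.finrank ℚ (Fin r → K) := h1
      _ = r * d := h2
  -- transfer from S to As
  set f : K → 𝓞 K := fun γ => if h : InCodifferent γ then ((hccod γ).mp h).choose else 0
    with hfdef
  have hf : ∀ γ ∈ S, γ = c * algebraMap (𝓞 K) K (f γ) := by
    intro γ hγ
    have h := hγ.2.1
    rw [hfdef]
    simp only [dif_pos h]
    exact ((hccod γ).mp h).choose_spec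
  have hfinj : Set.InjOn f S := by
    intro γ1 h1 γ2 h2 he
    rw [hf γ1 h1, hf γ2 h2, he]
  have hfim : f '' S ⊆ As := by
    rintro _ ⟨γ, hγ, rfl⟩
    constructor
    · intro σ
      have h1 : σ γ = σ c * σ (algebraMap (𝓞 K) K (f γ)) := by
        conv_lhs => rw [hf γ hγ]
        rw [map_mul]
      have h2 := hγ.1 σ
      have h3 := hcpos σ
      nlinarith [h1, h2, h3]
    · show Algebra.trace ℚ K (c * algebraMap (𝓞 K) K (f γ)) = 1
      rw [← hf γ hγ]
      exact hγ.2.2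
  have hSfin : S.Finite := Set.Finite.of_finite_image (hfinAs.subset hfim) hfinj
  refine ⟨hSfin, ?_⟩
  calc S.ncard = (f '' S).ncard := (Set.ncard_image_of_injOn hfinj).symm
    _ ≤ As.ncard := Set.ncard_le_ncard hfim hfinAs
    _ ≤ r * d := hcardAs

end Main
end
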